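/- For every i ≥ 1 one has D₁(u_i) = 0 and D₂(u_i) = q21^{-1}·(1 − q12·q21·q22^{i-1})·[i]_{q22^{-1}}·u_{i-1}, where the elements u_i ∈ F are defined by u_0 := x1 and u_{i+1} := u_i·x2 − q12·q22^i·x2·u_i. In particular u_i lies in the kernel of D₁ and is annihilated by D₂ composed i times if and only if some factor (1 − q12·q21·q22^{j})·[j+1]_{q22^{-1}} with j < i vanishes. -/

import Mathlib

noncomputable section

variable {k : Type*} [Field k]

/-- The algebra endomorphism of the free algebra on two generators with
`x1 ↦ a • x1`, `x2 ↦ b • x2`. -/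
def alph (a b : k) : FreeAlgebra k (Fin 2) →ₐ[k] FreeAlgebra k (Fin 2) :=
  FreeAlgebra.lift k ![a • FreeAlgebra.ι k 0, b • FreeAlgebra.ι k 1]

/-- The elements `z_i`, defined by `z_0 = x2`, `z_{i+1} = x1·z_i − q11^i·q12·z_i·x1`. -/
def zz (q11 q12 : k) : ℕ → FreeAlgebra k (Fin 2)
  | 0 => FreeAlgebra.ι k 1
  | (i + 1) => FreeAlgebra.ι k 0 * zz q11 q12 i
      - (q11 ^ i * q12) • (zz q11 q12 i * FreeAlgebra.ι k 0)

/-- The elements `u_i`, defined by `u_0 = x1`, `u_{i+1} = u_i·x2 − q12·q22^i·x2·u_i`. -/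
def uu (q12 q22 : k) : ℕ → FreeAlgebra k (Fin 2)
  | 0 => FreeAlgebra.ι k 0
  | (i + 1) => uu q12 q22 i * FreeAlgebra.ι k 1
      - (q12 * q22 ^ i) • (FreeAlgebra.ι k 1 * uu q12 q22 i)

/-- The q-number `[m]_p = 1 + p + ⋯ + p^{m-1}`. -/
def qnum (p : k) (m : ℕ) : k := ∑ j ∈ Finset.range m, p ^ j

/-- The q-factorial `[m]!_p = [1]_p·[2]_p⋯[m]_p`. -/
def qfact (p : k) (m : ℕ) : k := ∏ l ∈ Finset.range m, qnum p (l + 1)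

/-- `b_i = ∏_{j=0}^{i-1} (1 − q11^j·q12·q21)`. -/
def bb (q11 q12 q21 : k) (i : ℕ) : k :=
  ∏ j ∈ Finset.range i, (1 - q11 ^ j * q12 * q21)

/-- `c_i = q21^{-i}·b_i·[i]!_{q11⁻¹}`. -/
def cc (q11 q12 q21 : k) (i : ℕ) : k :=
  q21⁻¹ ^ i * bb q11 q12 q21 i * qfact q11⁻¹ i

/-- `d_{i,0}`. -/
def dd (q11 q12 q21 q22 : k) (i : ℕ) : k :=
  q21⁻¹ * (1 - q11 ^ i * q12 * q21) * qnum q11⁻¹ (i + 1)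
    + (q11 ^ (i * (i + 1)) * q12 ^ i * q21 ^ (i + 1) * q22)⁻¹
    - q11 ^ (i * (i + 1)) * q12 ^ (i + 1) * q21 ^ i * q22

theorem D_u_eq
    (q11 q12 q21 q22 : k)
    (hq11 : q11 ≠ 0) (hq12 : q12 ≠ 0) (hq21 : q21 ≠ 0) (hq22 : q22 ≠ 0)
    (D1 : FreeAlgebra k (Fin 2) →ₗ[k] FreeAlgebra k (Fin 2))
    (hD1one : D1 1 = 0)
    (hD1x1 : D1 (FreeAlgebra.ι k 0) = 1)
    (hD1x2 : D1 (FreeAlgebra.ι k 1) = 0)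
    (hD1mul : ∀ a b : FreeAlgebra k (Fin 2),
      D1 (a * b) = D1 a * b + alph q11⁻¹ q12⁻¹ a * D1 b)
    (D2 : FreeAlgebra k (Fin 2) →ₗ[k] FreeAlgebra k (Fin 2))
    (hD2one : D2 1 = 0)
    (hD2x1 : D2 (FreeAlgebra.ι k 0) = 0)
    (hD2x2 : D2 (FreeAlgebra.ι k 1) = 1)
    (hD2mul : ∀ a b : FreeAlgebra k (Fin 2),
      D2 (a * b) = D2 a * b + alph q21⁻¹ q22⁻¹ a * D2 b)
 :
    ∀ i : ℕ, 1 ≤ i →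
      D1 (uu q12 q22 i) = 0 ∧
      D2 (uu q12 q22 i)
        = (q21⁻¹ * (1 - q12 * q21 * q22 ^ (i - 1)) * qnum q22⁻¹ i) • uu q12 q22 (i - 1) ∧
      ((⇑D2)^[i] (uu q12 q22 i) = 0 ↔
        ∃ j < i, (1 - q12 * q21 * q22 ^ j) * qnum q22⁻¹ (j + 1) = 0) := by
  -- values of the twisting automorphisms on the generators
  have ha1x2 : alph (q11⁻¹ : k) q12⁻¹ (FreeAlgebra.ι k 1) = q12⁻¹ • FreeAlgebra.ι k 1 := by
    simp [alph]
  have ha2x1 : alph (q21⁻¹ : k) q22⁻¹ (FreeAlgebra.ι k 0) = q21⁻¹ • FreeAlgebra.ι k 0 := by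
    simp [alph]
  have ha2x2 : alph (q21⁻¹ : k) q22⁻¹ (FreeAlgebra.ι k 1) = q22⁻¹ • FreeAlgebra.ι k 1 := by
    simp [alph]
  -- D1 annihilates u_{i+1}
  have hD1u : ∀ n : ℕ, D1 (uu q12 q22 (n + 1)) = 0 := by
    intro n
    induction n with
    | zero =>
      simp only [uu, map_sub, map_smul, hD1mul, hD1x1, hD1x2, ha1x2, pow_zero, mul_one,
        one_mul, mul_zero, zero_mul, add_zero, zero_add]
      rw [smul_smul, mul_inv_cancel₀ hq12, one_smul, sub_self]
    | succ n ih =>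
      have key : uu q12 q22 (n + 2)
          = uu q12 q22 (n + 1) * FreeAlgebra.ι k 1
            - (q12 * q22 ^ (n + 1)) • (FreeAlgebra.ι k 1 * uu q12 q22 (n + 1)) := rfl
      rw [key, map_sub, map_smul, hD1mul, hD1mul, hD1x2, ih]
      simp
  -- action of alph on u_n
  have ha2u : ∀ n : ℕ, alph (q21⁻¹ : k) q22⁻¹ (uu q12 q22 n)
      = (q21⁻¹ * q22⁻¹ ^ n) • uu q12 q22 n := by
    intro n
    induction n with
    | zero => simpa [uu] using ha2x1
    | succ n ih =>
      simp only [uu, map_sub, map_smul, map_mul, ih, ha2x2]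
      rw [smul_mul_assoc, mul_smul_comm, smul_smul, smul_mul_assoc, mul_smul_comm,
        smul_smul, smul_smul, smul_sub, smul_smul]
      congr 2
      · ring
      · ring
  -- scalar coefficients
  set lam : ℕ → k := fun n => q21⁻¹ * (1 - q12 * q21 * q22 ^ n) * qnum q22⁻¹ (n + 1) with hlam
  have hpow : ∀ n : ℕ, q22 ^ n * qnum q22⁻¹ (n + 1) = ∑ j ∈ Finset.range (n + 1), q22 ^ j := by
    intro n
    induction n with
    | zero => simp [qnum]
    | succ n ih =>
      rw [show qnum q22⁻¹ (n + 2) = qnum q22⁻¹ (n + 1) + q22⁻¹ ^ (n + 1) from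
          Finset.sum_range_succ _ _, geom_sum_succ]
      have h1 : q22 ^ (n + 1) * q22⁻¹ ^ (n + 1) = 1 := by
        rw [← mul_pow, mul_inv_cancel₀ hq22, one_pow]
      linear_combination q22 * ih + h1
  have hlamrec : ∀ n : ℕ,
      lam (n + 1) = lam n + q21⁻¹ * q22⁻¹ ^ (n + 1) - q12 * q22 ^ (n + 1) := by
    intro n
    have e1 : ∀ m : ℕ, lam m = q21⁻¹ * qnum q22⁻¹ (m + 1)
        - q12 * (q22 ^ m * qnum q22⁻¹ (m + 1)) := by
      intro m
      rw [hlam]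
      field_simp
    rw [e1, e1, hpow, hpow, Finset.sum_range_succ,
      show qnum q22⁻¹ (n + 2) = qnum q22⁻¹ (n + 1) + q22⁻¹ ^ (n + 1) from
        Finset.sum_range_succ _ _]
    ring
  -- D2 on u_{n+1}
  have hD2u : ∀ n : ℕ, D2 (uu q12 q22 (n + 1)) = lam n • uu q12 q22 n := by
    intro n
    induction n with
    | zero =>
      simp only [uu, map_sub, map_smul, hD2mul, hD2x1, hD2x2, ha2x1, ha2x2, pow_zero, mul_one,
        zero_mul, mul_one, mul_zero, zero_add, add_zero, smul_mul_assoc, one_mul]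
      have h0 : lam 0 = q21⁻¹ - q12 := by
        simp only [hlam, qnum, pow_zero, Finset.range_one, Finset.sum_singleton]
        field_simp
        simp only [zero_add, Finset.sum_range_one, pow_zero]
        ring
      rw [h0, sub_smul]
    | succ n ih =>
      have key : uu q12 q22 (n + 2)
          = uu q12 q22 (n + 1) * FreeAlgebra.ι k 1
            - (q12 * q22 ^ (n + 1)) • (FreeAlgebra.ι k 1 * uu q12 q22 (n + 1)) := rfl
      rw [key, map_sub, map_smul, hD2mul, hD2mul, hD2x2, ih, ha2u, ha2x2, mul_one, one_mul]
      rw [hlamrec n]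
      have keyn : uu q12 q22 (n + 1)
          = uu q12 q22 n * FreeAlgebra.ι k 1
            - (q12 * q22 ^ n) • (FreeAlgebra.ι k 1 * uu q12 q22 n) := rfl
      rw [keyn]
      simp only [smul_mul_assoc, mul_smul_comm, smul_smul, smul_sub, smul_add, mul_sub, sub_mul,
        add_mul, mul_add]
      match_scalars
      · ring
      · field_simp
        ring
  -- iterates
  have hiter : ∀ n : ℕ, (⇑D2)^[n] (uu q12 q22 n)
      = (∏ j ∈ Finset.range n, lam j) • FreeAlgebra.ι k 0 := by
    intro n
    induction n with
    | zero => simp [uu]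
    | succ n ih =>
      rw [Function.iterate_succ_apply, hD2u, ← Module.End.pow_apply, map_smul,
        Module.End.pow_apply, ih, smul_smul, Finset.prod_range_succ, mul_comm]
  intro i hi
  obtain ⟨n, rfl⟩ : ∃ n, i = n + 1 := ⟨i - 1, by omega⟩
  refine ⟨hD1u n, ?_, ?_⟩
  · simpa using hD2u n
  · rw [hiter, smul_eq_zero]
    have hx : (FreeAlgebra.ι k (0 : Fin 2)) ≠ 0 := FreeAlgebra.ι_ne_zero 0
    simp only [hx, or_false, Finset.prod_eq_zero_iff, Finset.mem_range]
    constructor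
    · rintro ⟨j, hj, hj0⟩
      refine ⟨j, hj, ?_⟩
      have : q21⁻¹ ≠ 0 := inv_ne_zero hq21
      rw [hlam] at hj0
      simp only at hj0
      rcases mul_eq_zero.mp hj0 with h | h
      · rcases mul_eq_zero.mp h with h' | h'
        · exact absurd h' this
        · rw [h', zero_mul]
      · rw [h, mul_zero]
    · rintro ⟨j, hj, hj0⟩
      exact ⟨j, hj, by rw [hlam]; simp only; rw [mul_assoc, hj0, mul_zero]⟩
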